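/- Let (p_n)_{n≥1} be the sequence of ordinary (rational) prime numbers and let N ≥ 1. Then for Lebesgue-almost every tuple (q_1, …, q_N) ∈ (1,∞)^N the following holds: the real numbers log 2, log 3, log 5, …, log q_1, …, log q_N are linearly independent over ℚ, the set 𝒩 = { m · q_1^{a_1} ⋯ q_N^{a_N} : m ∈ ℕ, m ≥ 1, (a_1,…,a_N) ∈ ℕ^N } is locally finite in [1,∞), and its strictly increasing enumeration (ν_n)_{n≥1} satisfies Bohr's condition: there exist c_1, c_2 > 0 such that ν_{n+1} − ν_n ≥ c_1 ν_{n+1}^{−c_2} for all n ≥ 1. -/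

import Mathlib

open Set Filter MeasureTheory

noncomputable section

/-- A sequence of Beurling primes: strictly increasing, first term `> 1`,
tending to infinity, with logarithms linearly independent over `ℚ`. -/
def IsBeurlingPrimes (q : ℕ → ℝ) : Prop :=
  StrictMono q ∧ 1 < q 0 ∧ Tendsto q atTop atTop ∧
    LinearIndependent ℚ fun n => Real.log (q n)

/-- The set of Beurling integers: all finite products of the `q i` with
natural number exponents (including the empty product `1`). -/
def beurlingIntegers (q : ℕ → ℝ) : Set ℝ :=
  {x | ∃ e : ℕ →₀ ℕ, x = e.prod fun i k => q i ^ k}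

/-- `ν` is the strictly increasing enumeration of `S`, tending to infinity. -/
def IsEnumeration (ν : ℕ → ℝ) (S : Set ℝ) : Prop :=
  StrictMono ν ∧ Tendsto ν atTop atTop ∧ (∀ n, ν n ∈ S) ∧ ∀ x ∈ S, ∃ n, ν n = x

/-- Bohr's condition for the increasing enumeration `ν`:
`ν (n+1) - ν n ≥ c₁ * ν (n+1) ^ (-c₂)` for all `n`. -/
def BohrCondition (ν : ℕ → ℝ) : Prop :=
  ∃ c₁ > (0:ℝ), ∃ c₂ > (0:ℝ), ∀ n : ℕ, ν (n+1) - ν n ≥ c₁ * ν (n+1) ^ (-c₂)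

/-- The Beurling prime counting function `π_q(x) = #{n : q_n ≤ x}`. -/
def piQ (q : ℕ → ℝ) (x : ℝ) : ℕ := Nat.card {n : ℕ | q n ≤ x}

/-- The logarithmic integral `li x = ∫_1^x (1-1/u)/log u du`. -/
def li (x : ℝ) : ℝ := ∫ u in (1:ℝ)..x, (1 - u⁻¹) / Real.log u

/-- The abscissa of convergence `σ_c` of the Dirichlet series `∑ ν_n^{-s}`. -/
def sigmaC (ν : ℕ → ℝ) : ℝ := sInf {σ : ℝ | Summable fun n => ν n ^ (-σ)}

/-- The multiplicative system generated by the ordinary primes together with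
the extra numbers `t 0, …, t (N-1)`. -/
def genSet {N : ℕ} (t : Fin N → ℝ) : Set ℝ :=
  {x : ℝ | ∃ m : ℕ, 1 ≤ m ∧ ∃ a : Fin N → ℕ, x = (m : ℝ) * ∏ i, t i ^ a i}

namespace BohrAux


abbrev pr (n : ℕ) : ℕ := Nat.nth Nat.Prime n

lemma pr_prime (n : ℕ) : (pr n).Prime :=
  Nat.nth_mem_of_infinite Nat.infinite_setOf_prime n

lemma pr_injective : Function.Injective pr :=
  Nat.nth_injective Nat.infinite_setOf_prime

lemma pr_pos (n : ℕ) : 0 < pr n := (pr_prime n).pos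

lemma log_prod_pow (s : Finset ℕ) (f : ℕ → ℕ) :
    Real.log (∏ n ∈ s, (pr n : ℕ) ^ f n : ℕ) = ∑ n ∈ s, (f n : ℝ) * Real.log (pr n) := by
  push_cast
  rw [Real.log_prod]
  · exact Finset.sum_congr rfl fun n _ => by rw [Real.log_pow]
  · intro n _
    have := pr_pos n
    positivity

lemma factorization_prod_pow (s : Finset ℕ) (f : ℕ → ℕ) (n : ℕ) (hn : n ∈ s) :
    (∏ i ∈ s, pr i ^ f i).factorization (pr n) = f n := by
  rw [Nat.factorization_prod (fun i _ => pow_ne_zero _ (pr_pos i).ne')]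
  rw [Finsupp.finset_sum_apply]
  rw [Finset.sum_eq_single_of_mem n hn]
  · rw [(pr_prime n).factorization_pow, Finsupp.single_apply, if_pos rfl]
  · intro i _ hi
    rw [(pr_prime i).factorization_pow, Finsupp.single_apply,
      if_neg (fun h => hi (pr_injective h))]

lemma linIndep_log_pr_int : LinearIndependent ℤ (fun n : ℕ => Real.log (pr n)) := by
  rw [linearIndependent_iff']
  intro s g hsum i hi
  have key : ∑ n ∈ s, ((g n).toNat : ℝ) * Real.log (pr n)
      = ∑ n ∈ s, ((-g n).toNat : ℝ) * Real.log (pr n) := by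
    have : ∀ n, ((g n).toNat : ℝ) - ((-g n).toNat : ℝ) = (g n : ℝ) := by
      intro n
      have := Int.toNat_sub_toNat_neg (g n)
      exact_mod_cast congrArg (Int.cast : ℤ → ℝ) this
    have h2 : ∑ n ∈ s, (((g n).toNat : ℝ) - ((-g n).toNat : ℝ)) * Real.log (pr n) = 0 := by
      simp_rw [this]
      simpa [zsmul_eq_mul] using hsum
    rw [← sub_eq_zero, ← Finset.sum_sub_distrib]
    simpa [sub_mul] using h2
  set N1 : ℕ := ∏ n ∈ s, pr n ^ (g n).toNat with hN1
  set N2 : ℕ := ∏ n ∈ s, pr n ^ (-g n).toNat with hN2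
  have hlog : Real.log N1 = Real.log N2 := by
    rw [hN1, hN2, log_prod_pow, log_prod_pow]; exact key
  have hN1pos : 0 < N1 := Finset.prod_pos fun n _ => pow_pos (pr_pos n) _
  have hN2pos : 0 < N2 := Finset.prod_pos fun n _ => pow_pos (pr_pos n) _
  have hN : N1 = N2 := by
    have := Real.log_injOn_pos (Set.mem_Ioi.mpr (by exact_mod_cast hN1pos))
      (Set.mem_Ioi.mpr (by exact_mod_cast hN2pos)) hlog
    exact_mod_cast this
  have hfac := congrArg (fun m => m.factorization (pr i)) hN
  rw [hN1, hN2] at hfac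
  simp only [factorization_prod_pow s _ i hi] at hfac
  omega

lemma linIndep_log_pr : LinearIndependent ℚ (fun n : ℕ => Real.log (pr n)) :=
  (LinearIndependent.iff_fractionRing ℤ ℚ).mp linIndep_log_pr_int



/-- Fubini: volume of a measurable set in `ℝ^{n+1}` as integral of slice volumes. -/
lemma volume_eq_slices {n : ℕ} (i : Fin (n + 1)) {S : Set (Fin (n + 1) → ℝ)}
    (hS : MeasurableSet S) :
    volume S = ∫⁻ y : Fin n → ℝ, volume {x : ℝ | i.insertNth x y ∈ S} := by
  have hmp := measurePreserving_piFinSuccAbove (fun _ : Fin (n + 1) => (volume : Measure ℝ)) i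
  set e := MeasurableEquiv.piFinSuccAbove (fun _ : Fin (n + 1) => ℝ) i with he
  have h1 : (volume : Measure (Fin (n+1) → ℝ)) S
      = ((volume : Measure ℝ).prod (Measure.pi fun _ : Fin n => volume)) (e.symm ⁻¹' S) := by
    have := hmp.map_eq
    calc (volume : Measure (Fin (n+1) → ℝ)) S = Measure.pi (fun _ => volume) S := by
          rw [MeasureTheory.volume_pi]
      _ = (Measure.map e (Measure.pi fun _ => volume)) (e.symm ⁻¹' S) := by
          rw [Measure.map_apply e.measurable (e.symm.measurable hS)]
          congr 1
          ext t
          simp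
      _ = _ := by rw [this]
  rw [h1, Measure.prod_apply_symm (e.symm.measurable hS)]
  have h2 : (Measure.pi fun _ : Fin n => (volume : Measure ℝ)) = volume := by
    rw [MeasureTheory.volume_pi]
  rw [h2]
  refine lintegral_congr fun y => ?_
  have hset : ((fun x : ℝ => (x, y)) ⁻¹' (⇑e.symm ⁻¹' S)) = {x : ℝ | i.insertNth x y ∈ S} := by
    ext x
    simp [e, MeasurableEquiv.piFinSuccAbove, Fin.insertNthEquiv]
  rw [hset]

lemma volume_zero_of_slices {n : ℕ} (i : Fin (n + 1)) {S : Set (Fin (n + 1) → ℝ)}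
    (hS : MeasurableSet S)
    (h : ∀ y : Fin n → ℝ, volume {x : ℝ | i.insertNth x y ∈ S} = 0) :
    volume S = 0 := by
  rw [volume_eq_slices i hS]
  simp [h]

lemma volume_le_of_slices {n : ℕ} (i : Fin (n + 1)) {S : Set (Fin (n + 1) → ℝ)}
    (hS : MeasurableSet S) {B' : Set (Fin n → ℝ)} (hB' : MeasurableSet B') {c : ENNReal}
    (h1 : ∀ y ∈ B', volume {x : ℝ | i.insertNth x y ∈ S} ≤ c)
    (h2 : ∀ y ∉ B', {x : ℝ | i.insertNth x y ∈ S} = ∅) :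
    volume S ≤ c * volume B' := by
  rw [volume_eq_slices i hS]
  calc ∫⁻ y, volume {x : ℝ | i.insertNth x y ∈ S}
      ≤ ∫⁻ y, B'.indicator (fun _ => c) y := by
        apply lintegral_mono
        intro y
        by_cases hy : y ∈ B'
        · rw [Set.indicator_of_mem hy]; exact h1 y hy
        · rw [Set.indicator_of_notMem hy]
          show volume {x : ℝ | i.insertNth x y ∈ S} ≤ 0
          rw [h2 y hy]; simp
    _ = c * volume B' := by rw [lintegral_indicator hB', setLIntegral_const]

/-- elementary: `y - x ≤ y^(d+1) - x^(d+1)` for `1 ≤ x ≤ y`. -/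
lemma sub_le_pow_sub (x y : ℝ) (h1 : 1 ≤ x) (hxy : x ≤ y) (d : ℕ) :
    y - x ≤ y ^ (d + 1) - x ^ (d + 1) := by
  induction d with
  | zero => simp
  | succ d ih =>
    have hx0 : (0:ℝ) ≤ x := by linarith
    have h3 : (1:ℝ) ≤ y ^ (d + 1) := one_le_pow₀ (by linarith)
    rw [pow_succ y (d+1), pow_succ x (d+1)]
    nlinarith [pow_le_pow_left₀ hx0 hxy (d+1), pow_nonneg hx0 (d+1)]

/-- the 1-D slice bound. -/
lemma slice_volume_bound {l r A B ε : ℝ} (hl : 1 ≤ l) (hA : 1 ≤ A) {d : ℕ} (hd : 1 ≤ d)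
    (hε : 0 ≤ ε) :
    volume {x : ℝ | x ∈ Icc l r ∧ |A * x ^ d - B| ≤ ε} ≤ ENNReal.ofReal (4 * ε) := by
  set T := {x : ℝ | x ∈ Icc l r ∧ |A * x ^ d - B| ≤ ε} with hT
  have pair : ∀ x1 ∈ T, ∀ x2 ∈ T, x1 ≤ x2 → x2 - x1 ≤ 2 * ε := by
    intro x1 h1 x2 h2 h12
    obtain ⟨⟨hx1l, _⟩, he1⟩ := h1
    obtain ⟨⟨hx2l, _⟩, he2⟩ := h2
    have hx11 : 1 ≤ x1 := le_trans hl hx1l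
    obtain ⟨d', rfl⟩ : ∃ d', d = d' + 1 := ⟨d - 1, by omega⟩
    have hp := sub_le_pow_sub x1 x2 hx11 h12 d'
    have habs : A * x2 ^ (d'+1) - A * x1 ^ (d'+1) ≤ 2 * ε := by
      have := abs_sub_abs_le_abs_sub (A * x2 ^ (d'+1) - B) (A * x1 ^ (d'+1) - B)
      have h' : A * x2 ^ (d'+1) - A * x1 ^ (d'+1)
          ≤ |A * x2 ^ (d'+1) - B| + |A * x1 ^ (d'+1) - B| := by
        have := abs_sub (A * x2 ^ (d'+1) - B) (A * x1 ^ (d'+1) - B)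
        calc A * x2 ^ (d'+1) - A * x1 ^ (d'+1)
            = (A * x2 ^ (d'+1) - B) - (A * x1 ^ (d'+1) - B) := by ring
          _ ≤ |(A * x2 ^ (d'+1) - B) - (A * x1 ^ (d'+1) - B)| := le_abs_self _
          _ ≤ |A * x2 ^ (d'+1) - B| + |A * x1 ^ (d'+1) - B| := abs_sub _ _
      linarith
    nlinarith [hp, habs, hA]
  rcases Set.eq_empty_or_nonempty T with h | ⟨t0, ht0⟩
  · rw [h]; simp
  · have hsub : T ⊆ Icc (t0 - 2*ε) (t0 + 2*ε) := by
      intro x hx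
      constructor
      · have := pair x hx t0 ht0
        rcases le_total x t0 with h' | h'
        · linarith [this h']
        · linarith
      · have := pair t0 ht0 x hx
        rcases le_total t0 x with h' | h'
        · linarith [this h']
        · linarith
    calc volume T ≤ volume (Icc (t0 - 2*ε) (t0 + 2*ε)) := measure_mono hsub
      _ = ENNReal.ofReal (4 * ε) := by rw [Real.volume_Icc]; congr 1; ring





/-- the family of logarithms -/
def vfam (t : Fin (n+1) → ℝ) : (ℕ ⊕ Fin (n+1)) → ℝ :=
  Sum.elim (fun m : ℕ => Real.log (pr m)) (fun i : Fin (n+1) => Real.log (t i))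

lemma measurable_vfam_lincomb (l : (ℕ ⊕ Fin (n+1)) →₀ ℚ) :
    Measurable fun t : Fin (n+1) → ℝ =>
      ∑ s ∈ l.support, (l s : ℝ) * vfam t s := by
  apply Finset.measurable_sum
  intro s _
  rcases s with m | i
  · simp only [vfam, Sum.elim_inl]; exact measurable_const
  · exact (Real.measurable_log.comp (measurable_pi_apply i)).const_mul _

lemma log_finite_fiber (r : ℝ) : {x : ℝ | Real.log x = r}.Finite := by
  have hfin : ({0, Real.exp r, -Real.exp r} : Set ℝ).Finite :=
    ((Set.finite_singleton (-Real.exp r)).insert (Real.exp r)).insert 0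
  apply hfin.subset
  intro x hx
  simp only [Set.mem_setOf_eq] at hx
  simp only [Set.mem_insert_iff, Set.mem_singleton_iff]
  by_cases hx0 : x = 0
  · exact Or.inl hx0
  · have habs : |x| = Real.exp r := by
      rw [← Real.log_abs] at hx
      rw [← hx, Real.exp_log (abs_pos.mpr hx0)]
    rcases abs_cases x with ⟨h, _⟩ | ⟨h, _⟩
    · exact Or.inr (Or.inl (by rw [← h, habs]))
    · refine Or.inr (Or.inr ?_)
      have : -x = Real.exp r := by rw [← habs, h]
      linarith

/-- For a nonzero coefficient family, the "relation" set is null. -/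
lemma relation_null (l : (ℕ ⊕ Fin (n+1)) →₀ ℚ) (hl : l ≠ 0) :
    volume {t : Fin (n+1) → ℝ | ∑ s ∈ l.support, (l s : ℝ) * vfam t s = 0} = 0 := by
  set Z := {t : Fin (n+1) → ℝ | ∑ s ∈ l.support, (l s : ℝ) * vfam t s = 0} with hZ
  have hZm : MeasurableSet Z :=
    measurableSet_eq_fun (measurable_vfam_lincomb l) measurable_const
  by_cases hj : ∃ j : Fin (n+1), l (Sum.inr j) ≠ 0
  · obtain ⟨j, hjl⟩ := hj
    apply volume_zero_of_slices j hZm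
    intro y
    -- the slice is contained in a finite set
    have key : ∀ x : ℝ, j.insertNth x y ∈ Z →
        ((l (Sum.inr j) : ℝ)) * Real.log x
          = ((l (Sum.inr j) : ℝ)) * Real.log ((1:ℝ))
            - ∑ s ∈ l.support, (l s : ℝ) * vfam (j.insertNth (1:ℝ) y) s := by
      intro x hx
      have hx' : ∑ s ∈ l.support, (l s : ℝ) * vfam (j.insertNth x y) s = 0 := hx
      have hsplit : ∑ s ∈ l.support, (l s : ℝ) * vfam (j.insertNth x y) s
          - ∑ s ∈ l.support, (l s : ℝ) * vfam (j.insertNth (1:ℝ) y) s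
          = (l (Sum.inr j) : ℝ) * (Real.log x - Real.log 1) := by
        rw [← Finset.sum_sub_distrib]
        have hmem : Sum.inr j ∈ l.support := Finsupp.mem_support_iff.mpr hjl
        rw [Finset.sum_eq_single_of_mem (Sum.inr j) hmem]
        · simp only [vfam, Sum.elim_inr, Fin.insertNth_apply_same]
          ring
        · intro s hs hne
          rcases s with m | i
          · simp [vfam]
          · have hij : i ≠ j := fun h => hne (by rw [h])
            obtain ⟨i', hi'⟩ := Fin.exists_succAbove_eq hij
            simp only [vfam, Sum.elim_inr, ← hi', Fin.insertNth_apply_succAbove]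
            ring
      rw [hx'] at hsplit
      linarith [hsplit]
    refine measure_mono_null (fun x hx => ?_)
      ((log_finite_fiber ((((l (Sum.inr j) : ℝ)) * Real.log ((1:ℝ))
          - ∑ s ∈ l.support, (l s : ℝ) * vfam (j.insertNth (1:ℝ) y) s)
            / (l (Sum.inr j) : ℝ))).measure_zero _)
    have hkey := key x hx
    have hne : ((l (Sum.inr j) : ℝ)) ≠ 0 := by exact_mod_cast hjl
    show Real.log x = _
    rw [eq_div_iff hne]
    linarith [hkey]
  · -- supported on primes only: `Z` is empty
    push_neg at hj
    have hempty : Z = ∅ := by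
      rw [Set.eq_empty_iff_forall_notMem]
      intro t ht
      have ht' : ∑ s ∈ l.support, (l s : ℝ) * vfam t s = 0 := ht
      classical
      set T : Finset ℕ := l.support.preimage Sum.inl (Sum.inl_injective.injOn) with hT
      have hsum : ∑ m ∈ T, (l (Sum.inl m) : ℝ) * Real.log (pr m)
          = ∑ s ∈ l.support, (l s : ℝ) * vfam t s := by
        rw [hT]
        refine Finset.sum_preimage Sum.inl l.support _ (fun s => (l s : ℝ) * vfam t s) ?_
        intro s hs hrange
        exfalso
        rcases s with m | i
        · exact hrange ⟨m, rfl⟩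
        · exact (Finsupp.mem_support_iff.mp hs) (hj i)
      have hzero : ∑ m ∈ T, (l (Sum.inl m)) • Real.log (pr m) = 0 := by
        have : ∑ m ∈ T, (l (Sum.inl m) : ℝ) * Real.log (pr m) = 0 := by
          rw [hsum, ht']
        simpa [Rat.smul_def] using this
      have hcoef := linearIndependent_iff'.mp linIndep_log_pr T
        (fun m => l (Sum.inl m)) hzero
      apply hl
      ext s
      rcases s with m | i
      · by_cases hm : m ∈ T
        · exact hcoef m hm
        · have : Sum.inl m ∉ l.support := by
            rw [hT] at hm
            simpa [Finset.mem_preimage] using hm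
          simpa using Finsupp.notMem_support_iff.mp this
      · exact hj i
    rw [hempty]
    simp



variable {n : ℕ}

def box (n k : ℕ) : Set (Fin (n+1) → ℝ) := Icc (fun _ => 1 + (k:ℝ)⁻¹) (fun _ => (k:ℝ))

def box' (n k : ℕ) : Set (Fin n → ℝ) := Icc (fun _ => 1 + (k:ℝ)⁻¹) (fun _ => (k:ℝ))

def FF (m : ℕ) (a : Fin (n+1) → ℕ) (t : Fin (n+1) → ℝ) : ℝ := ((m:ℝ)+1) * ∏ i, t i ^ a i

def eps0 (k m m' : ℕ) (a a' : Fin (n+1) → ℕ) : ℝ :=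
  (2:ℝ)⁻¹ * ((((m:ℝ)+1)^2)⁻¹ * ((((m':ℝ)+1)^2)⁻¹ * (((k:ℝ) ^ (2 * ∑ i, a i))⁻¹ *
    ((k:ℝ) ^ (2 * ∑ i, a' i))⁻¹)))

def EE (k j m m' : ℕ) (a a' : Fin (n+1) → ℕ) : Set (Fin (n+1) → ℝ) :=
  {t | t ∈ box n k ∧ FF m a t - FF m' a' t ≠ 0 ∧
    |FF m a t - FF m' a' t| ≤ ((j:ℝ)+1)⁻¹ * eps0 k m m' a a'}

lemma eps0_nonneg (k m m' : ℕ) (a a' : Fin (n+1) → ℕ) : 0 ≤ eps0 k m m' a a' := by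
  unfold eps0; positivity

lemma eps0_symm (k m m' : ℕ) (a a' : Fin (n+1) → ℕ) :
    eps0 k m m' a a' = eps0 k m' m a' a := by
  unfold eps0; ring

lemma EE_symm (k j m m' : ℕ) (a a' : Fin (n+1) → ℕ) :
    EE k j m m' a a' = EE k j m' m a' a := by
  unfold EE
  ext t
  rw [eps0_symm]
  constructor <;> rintro ⟨h1, h2, h3⟩ <;>
    exact ⟨h1, by intro h; apply h2; linarith [h], by rwa [abs_sub_comm]⟩

lemma measurable_FF (m : ℕ) (a : Fin (n+1) → ℕ) : Measurable (FF m a) := by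
  apply Measurable.const_mul
  exact Finset.measurable_prod _ fun i _ => (measurable_pi_apply i).pow_const _

lemma measurableSet_EE (k j m m' : ℕ) (a a' : Fin (n+1) → ℕ) :
    MeasurableSet (EE k j m m' a a') := by
  have hf : Measurable fun t => FF m a t - FF m' a' t :=
    (measurable_FF m a).sub (measurable_FF m' a')
  have h1 : MeasurableSet (box n k) := measurableSet_Icc
  have h2 : MeasurableSet {t : Fin (n+1) → ℝ | FF m a t - FF m' a' t ≠ 0} := by
    rw [← Set.compl_setOf]
    exact (measurableSet_eq_fun hf measurable_const).compl
  have h3 : MeasurableSet {t : Fin (n+1) → ℝ |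
      |FF m a t - FF m' a' t| ≤ ((j:ℝ)+1)⁻¹ * eps0 k m m' a a'} :=
    measurableSet_le hf.abs measurable_const
  exact h1.inter (h2.inter h3)

lemma mem_box_iff {k : ℕ} {t : Fin (n+1) → ℝ} :
    t ∈ box n k ↔ ∀ i, 1 + (k:ℝ)⁻¹ ≤ t i ∧ t i ≤ k := by
  simp only [box, Set.mem_Icc, Pi.le_def]
  constructor
  · rintro ⟨h1, h2⟩ i; exact ⟨h1 i, h2 i⟩
  · intro h; exact ⟨fun i => (h i).1, fun i => (h i).2⟩

lemma mem_box'_iff {k : ℕ} {y : Fin n → ℝ} :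
    y ∈ box' n k ↔ ∀ i, 1 + (k:ℝ)⁻¹ ≤ y i ∧ y i ≤ k := by
  simp only [box', Set.mem_Icc, Pi.le_def]
  constructor
  · rintro ⟨h1, h2⟩ i; exact ⟨h1 i, h2 i⟩
  · intro h; exact ⟨fun i => (h i).1, fun i => (h i).2⟩

/-- slice containment, case `a' jc < a jc`. -/
lemma slice_subset (k j m m' : ℕ) (a a' : Fin (n+1) → ℕ) (jc : Fin (n+1))
    (hd : a' jc < a jc) (y : Fin n → ℝ) (hy : ∀ i, 1 ≤ y i) :
    {x : ℝ | jc.insertNth x y ∈ EE k j m m' a a'} ⊆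
      {x : ℝ | x ∈ Icc (1 + (k:ℝ)⁻¹) (k:ℝ) ∧
        |(((m:ℝ)+1) * ∏ i, y i ^ (a (jc.succAbove i))) * x ^ (a jc - a' jc)
          - ((m':ℝ)+1) * ∏ i, y i ^ (a' (jc.succAbove i))|
            ≤ ((j:ℝ)+1)⁻¹ * eps0 k m m' a a'} := by
  intro x hx
  obtain ⟨hbox, hne, habs⟩ := hx
  set tt : Fin (n+1) → ℝ := jc.insertNth x y with htt
  have ht_same : tt jc = x := by simp [htt]
  have ht_ab : ∀ i : Fin n, tt (jc.succAbove i) = y i := fun i => by simp [htt]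
  have hxIcc : x ∈ Icc (1 + (k:ℝ)⁻¹) (k:ℝ) := by
    have := (mem_box_iff.mp hbox) jc
    rw [ht_same] at this
    exact ⟨this.1, this.2⟩
  have hx1 : 1 ≤ x := by
    have : (0:ℝ) ≤ (k:ℝ)⁻¹ := by positivity
    have := hxIcc.1
    linarith
  have hFa : FF m a tt
      = (((m:ℝ)+1) * ∏ i, y i ^ (a (jc.succAbove i))) * x ^ (a jc) := by
    unfold FF
    rw [Fin.prod_univ_succAbove (fun i => tt i ^ a i) jc]
    rw [ht_same, Finset.prod_congr rfl (fun i (_ : i ∈ Finset.univ) => by rw [ht_ab i])]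
    ring
  have hFb : FF m' a' tt
      = (((m':ℝ)+1) * ∏ i, y i ^ (a' (jc.succAbove i))) * x ^ (a' jc) := by
    unfold FF
    rw [Fin.prod_univ_succAbove (fun i => tt i ^ a' i) jc]
    rw [ht_same, Finset.prod_congr rfl (fun i (_ : i ∈ Finset.univ) => by rw [ht_ab i])]
    ring
  have hpow : x ^ (a jc) = x ^ (a' jc) * x ^ (a jc - a' jc) := by
    rw [← pow_add]
    congr 1
    omega
  have hfactor : FF m a tt - FF m' a' tt
      = x ^ (a' jc) * ((((m:ℝ)+1) * ∏ i, y i ^ (a (jc.succAbove i))) * x ^ (a jc - a' jc)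
        - ((m':ℝ)+1) * ∏ i, y i ^ (a' (jc.succAbove i))) := by
    rw [hFa, hFb, hpow]; ring
  have hxpow1 : 1 ≤ x ^ (a' jc) := one_le_pow₀ hx1
  refine ⟨hxIcc, ?_⟩
  have habs' : |FF m a tt - FF m' a' tt|
      = x ^ (a' jc) * |(((m:ℝ)+1) * ∏ i, y i ^ (a (jc.succAbove i))) * x ^ (a jc - a' jc)
        - ((m':ℝ)+1) * ∏ i, y i ^ (a' (jc.succAbove i))| := by
    rw [hfactor, abs_mul, abs_of_nonneg (by positivity : (0:ℝ) ≤ x ^ (a' jc))]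
  calc |(((m:ℝ)+1) * ∏ i, y i ^ (a (jc.succAbove i))) * x ^ (a jc - a' jc)
        - ((m':ℝ)+1) * ∏ i, y i ^ (a' (jc.succAbove i))|
      ≤ x ^ (a' jc) * |(((m:ℝ)+1) * ∏ i, y i ^ (a (jc.succAbove i))) * x ^ (a jc - a' jc)
        - ((m':ℝ)+1) * ∏ i, y i ^ (a' (jc.succAbove i))| :=
        le_mul_of_one_le_left (abs_nonneg _) hxpow1
    _ = |FF m a tt - FF m' a' tt| := habs'.symm
    _ ≤ ((j:ℝ)+1)⁻¹ * eps0 k m m' a a' := habs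

lemma prod_pow_ge_one' {ι : Type*} [Fintype ι] {t : ι → ℝ} (ht : ∀ i, 1 ≤ t i) (a : ι → ℕ) :
    1 ≤ ∏ i, t i ^ a i := by
  calc (1:ℝ) = ∏ _i : ι, (1:ℝ) := by simp
    _ ≤ ∏ i, t i ^ a i :=
        Finset.prod_le_prod (fun i _ => zero_le_one) (fun i _ => one_le_pow₀ (ht i))

lemma box_one_le {k : ℕ} {t : Fin (n+1) → ℝ} (ht : t ∈ box n k) : ∀ i, 1 ≤ t i := by
  intro i
  have h0 : (0:ℝ) ≤ (k:ℝ)⁻¹ := by positivity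
  linarith [((mem_box_iff.mp ht) i).1]

lemma eps0_le_half (k m m' : ℕ) (hk : 2 ≤ k) (a a' : Fin (n+1) → ℕ) :
    eps0 k m m' a a' ≤ 1/2 := by
  have hk1 : (1:ℝ) ≤ (k:ℝ) := by exact_mod_cast Nat.one_le_of_lt hk
  have hb : ∀ (b : Fin (n+1) → ℕ), ((k:ℝ) ^ (2 * ∑ i, b i))⁻¹ ≤ 1 := by
    intro b
    rw [inv_le_one_iff₀]; right; exact one_le_pow₀ hk1
  have hm : ∀ (m : ℕ), (((m:ℝ)+1)^2)⁻¹ ≤ 1 := by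
    intro m
    rw [inv_le_one_iff₀]; right
    have : (1:ℝ) ≤ (m:ℝ)+1 := by linarith [Nat.cast_nonneg (α := ℝ) m]
    exact one_le_pow₀ this
  have h1 : (((m:ℝ)+1)^2)⁻¹ * ((((m':ℝ)+1)^2)⁻¹ * (((k:ℝ) ^ (2 * ∑ i, a i))⁻¹ *
      ((k:ℝ) ^ (2 * ∑ i, a' i))⁻¹)) ≤ 1 := by
    calc (((m:ℝ)+1)^2)⁻¹ * ((((m':ℝ)+1)^2)⁻¹ * (((k:ℝ) ^ (2 * ∑ i, a i))⁻¹ *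
        ((k:ℝ) ^ (2 * ∑ i, a' i))⁻¹)) ≤ 1 * (1 * (1 * 1)) := by
          apply mul_le_mul (hm m) _ (by positivity) zero_le_one
          apply mul_le_mul (hm m') _ (by positivity) zero_le_one
          exact mul_le_mul (hb a) (hb a') (by positivity) zero_le_one
      _ = 1 := by ring
  unfold eps0
  nlinarith [h1]

/-- diagonal exponents: `EE` is empty. -/
lemma EE_empty_of_eq_exp (k j m m' : ℕ) (hk : 2 ≤ k) (a : Fin (n+1) → ℕ) :
    EE k j m m' a a = ∅ := by
  rw [Set.eq_empty_iff_forall_notMem]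
  rintro t ⟨hbox, hne, habs⟩
  have ht1 := box_one_le hbox
  have hprod := prod_pow_ge_one' ht1 a
  have hdiff : FF m a t - FF m' a t = ((m:ℝ) - m') * ∏ i, t i ^ a i := by
    unfold FF; ring
  have hmm : ((m:ℝ) - m') ≠ 0 := by
    intro h
    apply hne
    rw [hdiff, h, zero_mul]
  have h1le : (1:ℝ) ≤ |FF m a t - FF m' a t| := by
    rw [hdiff, abs_mul]
    have h1 : (1:ℝ) ≤ |(m:ℝ) - m'| := by
      have hne' : m ≠ m' := fun h => hmm (by rw [h]; ring)
      rcases lt_or_gt_of_ne hne' with h | h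
      · have hc : (m:ℝ) + 1 ≤ (m':ℝ) := by exact_mod_cast h
        rw [abs_of_neg (by linarith : (m:ℝ) - m' < 0)]
        linarith
      · have hc : (m':ℝ) + 1 ≤ (m:ℝ) := by exact_mod_cast h
        rw [abs_of_pos (by linarith : (0:ℝ) < (m:ℝ) - m')]
        linarith
    calc (1:ℝ) = 1 * 1 := by ring
      _ ≤ |(m:ℝ) - m'| * |∏ i, t i ^ a i| := by
          apply mul_le_mul h1 _ zero_le_one (abs_nonneg _)
          rw [abs_of_nonneg (by linarith : (0:ℝ) ≤ ∏ i, t i ^ a i)]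
          exact hprod
  have hinv1 : ((j:ℝ)+1)⁻¹ ≤ 1 := by
    rw [inv_le_one_iff₀]; right; linarith [Nat.cast_nonneg (α := ℝ) j]
  have heps : ((j:ℝ)+1)⁻¹ * eps0 k m m' a a < 1 := by
    have h2 := eps0_le_half k m m' hk a a
    have h3 : 0 ≤ eps0 k m m' a a := eps0_nonneg k m m' a a
    nlinarith
  linarith [le_trans h1le habs]

/-- main per-index measure bound, asymmetric case -/
lemma EE_bound_aux (k j m m' : ℕ) (hk : 2 ≤ k) (a a' : Fin (n+1) → ℕ) (jc : Fin (n+1))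
    (hlt : a' jc < a jc) :
    volume (EE k j m m' a a') ≤
      ENNReal.ofReal (4 * (((j:ℝ)+1)⁻¹ * eps0 k m m' a a')) * volume (box' n k) := by
  apply volume_le_of_slices jc (measurableSet_EE k j m m' a a')
    (measurableSet_Icc : MeasurableSet (box' n k))
  · intro y hy
    have hy1 : ∀ i, 1 ≤ y i := by
      intro i
      have h0 : (0:ℝ) ≤ (k:ℝ)⁻¹ := by positivity
      linarith [(mem_box'_iff.mp hy i).1]
    refine le_trans (measure_mono (slice_subset k j m m' a a' jc hlt y hy1)) ?_
    apply slice_volume_bound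
    · have h0 : (0:ℝ) ≤ (k:ℝ)⁻¹ := by positivity
      linarith
    · have h1 : (1:ℝ) ≤ (m:ℝ)+1 := by linarith [Nat.cast_nonneg (α := ℝ) m]
      have h2 : (1:ℝ) ≤ ∏ i, y i ^ (a (jc.succAbove i)) :=
        prod_pow_ge_one' hy1 _
      calc (1:ℝ) = 1 * 1 := by ring
        _ ≤ ((m:ℝ)+1) * ∏ i, y i ^ (a (jc.succAbove i)) :=
            mul_le_mul h1 h2 zero_le_one (by linarith)
    · omega
    · have := eps0_nonneg k m m' a a'
      positivity
  · intro y hy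
    rw [Set.eq_empty_iff_forall_notMem]
    intro x hx
    apply hy
    obtain ⟨hbox, _, _⟩ := hx
    refine mem_box'_iff.mpr fun i => ?_
    have h := (mem_box_iff.mp hbox) (jc.succAbove i)
    simpa using h

lemma EE_bound (k j m m' : ℕ) (hk : 2 ≤ k) (a a' : Fin (n+1) → ℕ) :
    volume (EE k j m m' a a') ≤
      ENNReal.ofReal (4 * (((j:ℝ)+1)⁻¹ * eps0 k m m' a a')) * volume (box' n k) := by
  by_cases haa : a = a'
  · subst haa
    rw [EE_empty_of_eq_exp k j m m' hk a]
    simp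
  · obtain ⟨jc, hjc⟩ := Function.ne_iff.mp haa
    rcases Nat.lt_or_ge (a' jc) (a jc) with hlt | hge
    · exact EE_bound_aux k j m m' hk a a' jc hlt
    · have hlt : a jc < a' jc := by omega
      rw [EE_symm, eps0_symm]
      exact EE_bound_aux k j m' m hk a' a jc hlt

lemma tsum_prod_mul {α β : Type*} (f : α → ENNReal) (g : β → ENNReal) :
    ∑' p : α × β, f p.1 * g p.2 = (∑' a, f a) * ∑' b, g b := by
  calc ∑' p : α × β, f p.1 * g p.2 = ∑' a, ∑' b, f a * g b :=
        ENNReal.tsum_prod (f := fun a b => f a * g b)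
    _ = ∑' a, f a * ∑' b, g b := tsum_congr fun a => ENNReal.tsum_mul_left
    _ = (∑' a, f a) * ∑' b, g b := ENNReal.tsum_mul_right

lemma tsum_geom_pi (q : ENNReal) (hq : q < 1) :
    ∀ N : ℕ, ∑' a : Fin N → ℕ, (∏ i, q ^ a i) ≠ ⊤ := by
  intro N
  induction N with
  | zero =>
    rw [tsum_eq_single (default : Fin 0 → ℕ)
      (fun b hb => absurd (Subsingleton.elim b default) hb)]
    simp
  | succ N ih =>
    have hterm : ∀ p : ℕ × (Fin N → ℕ),
        (∏ i, q ^ ((Fin.consEquiv (fun _ : Fin (N+1) => ℕ)) p i))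
          = q ^ p.1 * ∏ i, q ^ p.2 i := by
      rintro ⟨x, b⟩
      rw [Fin.prod_univ_succ]
      simp [Fin.consEquiv]
    have h1 : ∑' a : Fin (N+1) → ℕ, ∏ i, q ^ a i
        = (∑' x : ℕ, q ^ x) * ∑' b : Fin N → ℕ, ∏ i, q ^ b i := by
      rw [← Equiv.tsum_eq (Fin.consEquiv (fun _ : Fin (N+1) => ℕ))
        (fun a => ∏ i, q ^ a i), tsum_congr hterm]
      exact tsum_prod_mul (fun x : ℕ => q ^ x) (fun b : Fin N → ℕ => ∏ i, q ^ b i)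
    rw [h1]
    apply ENNReal.mul_ne_top _ ih
    rw [ENNReal.tsum_geometric]
    rw [Ne, ENNReal.inv_eq_top]
    have : 0 < 1 - q := tsub_pos_of_lt hq
    exact this.ne'

lemma sum_sq_inv_ne_top : ∑' m : ℕ, ENNReal.ofReal ((((m:ℝ)+1)^2)⁻¹) ≠ ⊤ := by
  have hs : Summable (fun m : ℕ => (((m:ℝ)+1)^2)⁻¹) := by
    have h0 : Summable (fun m : ℕ => 1 / (m:ℝ)^2) :=
      (Real.summable_one_div_nat_pow (p := 2)).mpr (by norm_num)
    have h1 := (summable_nat_add_iff 1).mpr h0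
    apply h1.congr
    intro m
    push_cast
    rw [one_div]
  rw [← ENNReal.ofReal_tsum_of_nonneg (fun m => by positivity) hs]
  exact ENNReal.ofReal_ne_top

lemma sum_kpow_ne_top (k : ℕ) (hk : 2 ≤ k) :
    ∑' a : Fin (n+1) → ℕ, ENNReal.ofReal (((k:ℝ) ^ (2 * ∑ i, a i))⁻¹) ≠ ⊤ := by
  have hk2 : (1:ℝ) < (k:ℝ)^2 := by
    have : (2:ℝ) ≤ (k:ℝ) := by exact_mod_cast hk
    nlinarith
  have hterm : ∀ a : Fin (n+1) → ℕ,
      ENNReal.ofReal (((k:ℝ) ^ (2 * ∑ i, a i))⁻¹)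
        = ∏ i, (ENNReal.ofReal (((k:ℝ)^2)⁻¹)) ^ a i := by
    intro a
    have h1 : ((k:ℝ) ^ (2 * ∑ i, a i))⁻¹ = ∏ i, (((k:ℝ)^2)⁻¹) ^ a i := by
      rw [pow_mul, ← Finset.prod_pow_eq_pow_sum, ← Finset.prod_inv_distrib]
      exact Finset.prod_congr rfl fun i _ => by rw [inv_pow]
    rw [h1, ENNReal.ofReal_prod_of_nonneg (fun i _ => by positivity)]
    exact Finset.prod_congr rfl fun i _ => by
      rw [ENNReal.ofReal_pow (by positivity)]
  rw [tsum_congr hterm]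
  exact tsum_geom_pi _ (ENNReal.ofReal_lt_one.mpr (by
    rw [inv_lt_one_iff₀]; right; exact hk2)) (n+1)

abbrev Idx (n : ℕ) := ℕ × ℕ × (Fin (n+1) → ℕ) × (Fin (n+1) → ℕ)

def WW (n k : ℕ) : ENNReal :=
  (∑' p : Idx n, ENNReal.ofReal (4 * eps0 k p.1 p.2.1 p.2.2.1 p.2.2.2))
    * volume (box' n k)

lemma WW_ne_top (k : ℕ) (hk : 2 ≤ k) : WW n k ≠ ⊤ := by
  apply ENNReal.mul_ne_top _ (IsCompact.measure_lt_top (isCompact_Icc)).ne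
  have hterm : ∀ p : Idx n,
      ENNReal.ofReal (4 * eps0 k p.1 p.2.1 p.2.2.1 p.2.2.2)
        = ENNReal.ofReal 2 * (ENNReal.ofReal ((((p.1:ℝ)+1)^2)⁻¹)
          * (ENNReal.ofReal ((((p.2.1:ℝ)+1)^2)⁻¹)
            * (ENNReal.ofReal (((k:ℝ) ^ (2 * ∑ i, p.2.2.1 i))⁻¹)
              * ENNReal.ofReal (((k:ℝ) ^ (2 * ∑ i, p.2.2.2 i))⁻¹)))) := by
    rintro ⟨m, m', a, a'⟩
    rw [← ENNReal.ofReal_mul (by positivity), ← ENNReal.ofReal_mul (by positivity),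
      ← ENNReal.ofReal_mul (by positivity), ← ENNReal.ofReal_mul (by norm_num)]
    congr 1
    unfold eps0
    ring
  rw [tsum_congr hterm, ENNReal.tsum_mul_left]
  apply ENNReal.mul_ne_top ENNReal.ofReal_ne_top
  have hT : (∑' p : Idx n, ENNReal.ofReal ((((p.1:ℝ)+1)^2)⁻¹)
      * (ENNReal.ofReal ((((p.2.1:ℝ)+1)^2)⁻¹)
        * (ENNReal.ofReal (((k:ℝ) ^ (2 * ∑ i, p.2.2.1 i))⁻¹)
          * ENNReal.ofReal (((k:ℝ) ^ (2 * ∑ i, p.2.2.2 i))⁻¹))))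
      = (∑' m : ℕ, ENNReal.ofReal ((((m:ℝ)+1)^2)⁻¹))
        * ((∑' m : ℕ, ENNReal.ofReal ((((m:ℝ)+1)^2)⁻¹))
          * ((∑' a : Fin (n+1) → ℕ, ENNReal.ofReal (((k:ℝ) ^ (2 * ∑ i, a i))⁻¹))
            * ∑' a : Fin (n+1) → ℕ, ENNReal.ofReal (((k:ℝ) ^ (2 * ∑ i, a i))⁻¹))) := by
    refine (tsum_prod_mul (fun m : ℕ => ENNReal.ofReal ((((m:ℝ)+1)^2)⁻¹))
      (fun pp : ℕ × (Fin (n+1) → ℕ) × (Fin (n+1) → ℕ) =>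
        ENNReal.ofReal ((((pp.1:ℝ)+1)^2)⁻¹)
          * (ENNReal.ofReal (((k:ℝ) ^ (2 * ∑ i, pp.2.1 i))⁻¹)
            * ENNReal.ofReal (((k:ℝ) ^ (2 * ∑ i, pp.2.2 i))⁻¹)))).trans ?_
    congr 1
    refine (tsum_prod_mul (fun m : ℕ => ENNReal.ofReal ((((m:ℝ)+1)^2)⁻¹))
      (fun pp : (Fin (n+1) → ℕ) × (Fin (n+1) → ℕ) =>
        ENNReal.ofReal (((k:ℝ) ^ (2 * ∑ i, pp.1 i))⁻¹)
          * ENNReal.ofReal (((k:ℝ) ^ (2 * ∑ i, pp.2 i))⁻¹))).trans ?_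
    congr 1
    exact tsum_prod_mul (fun a : Fin (n+1) → ℕ => ENNReal.ofReal (((k:ℝ) ^ (2 * ∑ i, a i))⁻¹))
      (fun a : Fin (n+1) → ℕ => ENNReal.ofReal (((k:ℝ) ^ (2 * ∑ i, a i))⁻¹))
  rw [hT]
  apply ENNReal.mul_ne_top sum_sq_inv_ne_top
  apply ENNReal.mul_ne_top sum_sq_inv_ne_top
  exact ENNReal.mul_ne_top (sum_kpow_ne_top k hk) (sum_kpow_ne_top k hk)

lemma union_bound (k j : ℕ) (hk : 2 ≤ k) :
    volume (⋃ p : Idx n, EE k j p.1 p.2.1 p.2.2.1 p.2.2.2)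
      ≤ ENNReal.ofReal (((j:ℝ)+1)⁻¹) * WW n k := by
  refine le_trans (measure_iUnion_le _) ?_
  have hterm : ∀ p : Idx n, volume (EE k j p.1 p.2.1 p.2.2.1 p.2.2.2)
      ≤ ENNReal.ofReal (((j:ℝ)+1)⁻¹)
        * (ENNReal.ofReal (4 * eps0 k p.1 p.2.1 p.2.2.1 p.2.2.2) * volume (box' n k)) := by
    intro p
    refine le_trans (EE_bound k j p.1 p.2.1 hk p.2.2.1 p.2.2.2) ?_
    rw [show (4:ℝ) * (((j:ℝ)+1)⁻¹ * eps0 k p.1 p.2.1 p.2.2.1 p.2.2.2)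
        = ((j:ℝ)+1)⁻¹ * (4 * eps0 k p.1 p.2.1 p.2.2.1 p.2.2.2) by ring,
      ENNReal.ofReal_mul (by positivity), mul_assoc]
  refine le_trans (ENNReal.tsum_le_tsum hterm) ?_
  rw [ENNReal.tsum_mul_left]
  rw [WW, ← ENNReal.tsum_mul_right]

lemma GG_null (k : ℕ) (hk : 2 ≤ k) :
    volume (⋂ j : ℕ, ⋃ p : Idx n, EE k j p.1 p.2.1 p.2.2.1 p.2.2.2) = 0 := by
  have hle : ∀ j : ℕ,
      volume (⋂ j : ℕ, ⋃ p : Idx n, EE k j p.1 p.2.1 p.2.2.1 p.2.2.2)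
        ≤ ENNReal.ofReal (((j:ℝ)+1)⁻¹) * WW n k :=
    fun j => le_trans (measure_mono (Set.iInter_subset _ j)) (union_bound k j hk)
  have htend : Tendsto (fun j : ℕ => ENNReal.ofReal (((j:ℝ)+1)⁻¹) * WW n k)
      atTop (nhds 0) := by
    have h1 : Tendsto (fun j : ℕ => ((j:ℝ)+1)⁻¹) atTop (nhds 0) := by
      simpa [one_div] using tendsto_one_div_add_atTop_nhds_zero_nat (𝕜 := ℝ)
    have h2 : Tendsto (fun j : ℕ => ENNReal.ofReal (((j:ℝ)+1)⁻¹)) atTop (nhds 0) := by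
      simpa using ENNReal.tendsto_ofReal h1
    have h3 : Tendsto (fun j : ℕ => ENNReal.ofReal (((j:ℝ)+1)⁻¹) * WW n k)
        atTop (nhds (0 * WW n k)) :=
      ENNReal.Tendsto.mul_const h2 (Or.inr (WW_ne_top (n := n) k hk))
    simpa using h3
  exact le_antisymm (ge_of_tendsto' htend hle) (zero_le)


def LL (k : ℕ) : ℝ := Real.log k / Real.log (1 + (k:ℝ)⁻¹)

lemma LL_pos (k : ℕ) (hk : 2 ≤ k) : 0 < LL k := by
  have h1 : (1:ℝ) < k := by exact_mod_cast hk
  have h2 : (0:ℝ) < (k:ℝ)⁻¹ := by positivity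
  exact div_pos (Real.log_pos h1) (Real.log_pos (by linarith))

lemma kpow_le (k : ℕ) (hk : 2 ≤ k) {s : ℕ} {x : ℝ} (hx : 1 ≤ x)
    (h : (1 + (k:ℝ)⁻¹) ^ s ≤ x) : (k:ℝ) ^ s ≤ x ^ LL k := by
  have hk1 : (1:ℝ) < k := by exact_mod_cast hk
  have hki : (0:ℝ) < (k:ℝ)⁻¹ := by positivity
  have hb : (1:ℝ) < 1 + (k:ℝ)⁻¹ := by linarith
  have hlogb : 0 < Real.log (1 + (k:ℝ)⁻¹) := Real.log_pos hb
  have hlogk : 0 < Real.log k := Real.log_pos hk1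
  have hx0 : (0:ℝ) < x := by linarith
  have hlogs : (s:ℝ) * Real.log (1 + (k:ℝ)⁻¹) ≤ Real.log x := by
    rw [← Real.log_pow]
    exact Real.log_le_log (by positivity) h
  rw [← Real.log_le_log_iff (by positivity) (Real.rpow_pos_of_pos hx0 _),
    Real.log_pow, Real.log_rpow hx0, LL, div_mul_eq_mul_div, le_div_iff₀ hlogb]
  calc (s:ℝ) * Real.log k * Real.log (1 + (k:ℝ)⁻¹)
      = Real.log k * ((s:ℝ) * Real.log (1 + (k:ℝ)⁻¹)) := by ring
    _ ≤ Real.log k * Real.log x := mul_le_mul_of_nonneg_left hlogs hlogk.le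

/-- The deterministic gap estimate for points outside all exceptional sets. -/
lemma gap_lemma (k j : ℕ) (hk : 2 ≤ k) (t : Fin (n+1) → ℝ) (htb : t ∈ box n k)
    (hE : ∀ p : Idx n, t ∉ EE k j p.1 p.2.1 p.2.2.1 p.2.2.2) :
    ∀ x ∈ genSet t, ∀ y ∈ genSet t, y < x →
      ((j:ℝ)+1)⁻¹ * 2⁻¹ * x ^ (-(4 + 4 * LL k)) ≤ x - y := by
  rintro x ⟨m, hm1, a, rfl⟩ y ⟨m', hm'1, a', rfl⟩ hyx
  have ht1 : ∀ i, 1 ≤ t i := box_one_le htb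
  have hm : (1:ℝ) ≤ m := by exact_mod_cast hm1
  have hm' : (1:ℝ) ≤ m' := by exact_mod_cast hm'1
  have hpa : (1:ℝ) ≤ ∏ i, t i ^ a i := prod_pow_ge_one' ht1 a
  have hpa' : (1:ℝ) ≤ ∏ i, t i ^ a' i := prod_pow_ge_one' ht1 a'
  set X : ℝ := (m:ℝ) * ∏ i, t i ^ a i with hX
  set Y : ℝ := (m':ℝ) * ∏ i, t i ^ a' i with hY
  have hX1 : (1:ℝ) ≤ X := by
    calc (1:ℝ) = 1 * 1 := by ring
      _ ≤ (m:ℝ) * ∏ i, t i ^ a i := mul_le_mul hm hpa zero_le_one (by linarith)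
  have hX0 : (0:ℝ) < X := by linarith
  have hFm : FF (m-1) a t = X := by
    unfold FF
    rw [hX]
    congr 1
    rw [Nat.cast_sub hm1]
    push_cast
    ring
  have hFm' : FF (m'-1) a' t = Y := by
    unfold FF
    rw [hY]
    congr 1
    rw [Nat.cast_sub hm'1]
    push_cast
    ring
  have hne : FF (m-1) a t - FF (m'-1) a' t ≠ 0 := by
    rw [hFm, hFm']
    intro h
    have : X = Y := by linarith
    linarith [hyx, this]
  have hnotE := hE (m-1, m'-1, a, a')
  simp only [EE, Set.mem_setOf_eq, not_and] at hnotE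
  have hgt : ((j:ℝ)+1)⁻¹ * eps0 k (m-1) (m'-1) a a' < X - Y := by
    have := hnotE htb hne
    rw [hFm, hFm'] at this
    have habs : |X - Y| = X - Y := abs_of_pos (by linarith)
    rw [habs] at this
    linarith [not_le.mp this]
  -- now bound eps0 from below by the rpow expression
  have hmX : (m:ℝ) ≤ X := by
    calc (m:ℝ) = m * 1 := by ring
      _ ≤ X := by rw [hX]; exact mul_le_mul_of_nonneg_left hpa (by linarith)
  have hm'X : (m':ℝ) ≤ X := by
    have h1 : (m':ℝ) ≤ Y := by
      calc (m':ℝ) = m' * 1 := by ring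
        _ ≤ Y := by rw [hY]; exact mul_le_mul_of_nonneg_left hpa' (by linarith)
    linarith
  have hPX : ∏ i, t i ^ a i ≤ X := by
    calc ∏ i, t i ^ a i = 1 * ∏ i, t i ^ a i := by ring
      _ ≤ X := by rw [hX]; exact mul_le_mul_of_nonneg_right hm (by linarith)
  have hPX' : ∏ i, t i ^ a' i ≤ X := by
    have h1 : ∏ i, t i ^ a' i ≤ Y := by
      calc ∏ i, t i ^ a' i = 1 * ∏ i, t i ^ a' i := by ring
        _ ≤ Y := by rw [hY]; exact mul_le_mul_of_nonneg_right hm' (by linarith)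
    linarith
  have hbase : ∀ b : Fin (n+1) → ℕ, (1 + (k:ℝ)⁻¹) ^ (∑ i, b i) ≤ ∏ i, t i ^ b i := by
    intro b
    rw [← Finset.prod_pow_eq_pow_sum]
    exact Finset.prod_le_prod (fun i _ => by positivity)
      (fun i _ => pow_le_pow_left₀ (by positivity) ((mem_box_iff.mp htb) i).1 (b i))
  have hka : (k:ℝ) ^ (∑ i, a i) ≤ X ^ LL k :=
    kpow_le k hk hX1 (le_trans (hbase a) hPX)
  have hka' : (k:ℝ) ^ (∑ i, a' i) ≤ X ^ LL k :=
    kpow_le k hk hX1 (le_trans (hbase a') hPX')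
  have hXL0 : (0:ℝ) < X ^ LL k := Real.rpow_pos_of_pos hX0 _
  have hk0 : (0:ℝ) < k := by positivity
  -- the big product inequality
  have hbig : (m:ℝ)^2 * ((m':ℝ)^2 * ((k:ℝ) ^ (2 * ∑ i, a i) * (k:ℝ) ^ (2 * ∑ i, a' i)))
      ≤ X ^ (4 + 4 * LL k) := by
    have hsplit : X ^ (4 + 4 * LL k) = X^(4:ℕ) * (X ^ LL k)^(4:ℕ) := by
      rw [Real.rpow_add hX0]
      congr 1
      · rw [← Real.rpow_natCast X 4]
        norm_num
      · rw [← Real.rpow_natCast (X ^ LL k) 4, ← Real.rpow_mul hX0.le]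
        congr 1
        ring
    rw [hsplit]
    have e1 : (k:ℝ) ^ (2 * ∑ i, a i) = ((k:ℝ) ^ (∑ i, a i))^2 := by
      rw [← pow_mul]
      congr 1
      ring
    have e2 : (k:ℝ) ^ (2 * ∑ i, a' i) = ((k:ℝ) ^ (∑ i, a' i))^2 := by
      rw [← pow_mul]
      congr 1
      ring
    rw [e1, e2]
    have hX4 : X^(4:ℕ) = X^2 * X^2 := by ring
    have hXL4 : (X ^ LL k)^(4:ℕ) = (X ^ LL k)^2 * (X ^ LL k)^2 := by ring
    rw [hX4, hXL4]
    calc (m:ℝ)^2 * ((m':ℝ)^2 * (((k:ℝ) ^ (∑ i, a i))^2 * ((k:ℝ) ^ (∑ i, a' i))^2))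
        ≤ X^2 * (X^2 * ((X ^ LL k)^2 * (X ^ LL k)^2)) := by
          apply mul_le_mul (pow_le_pow_left₀ (by linarith) hmX 2) _ (by positivity)
            (by positivity)
          apply mul_le_mul (pow_le_pow_left₀ (by linarith) hm'X 2) _ (by positivity)
            (by positivity)
          exact mul_le_mul (pow_le_pow_left₀ (by positivity) hka 2)
            (pow_le_pow_left₀ (by positivity) hka' 2) (by positivity) (by positivity)
      _ = X^2 * X^2 * ((X ^ LL k)^2 * (X ^ LL k)^2) := by ring
  -- conclude
  have heps : eps0 k (m-1) (m'-1) a a'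
      = 2⁻¹ * (((m:ℝ)^2)⁻¹ * (((m':ℝ)^2)⁻¹ * (((k:ℝ) ^ (2 * ∑ i, a i))⁻¹ *
          ((k:ℝ) ^ (2 * ∑ i, a' i))⁻¹))) := by
    unfold eps0
    rw [Nat.cast_sub hm1, Nat.cast_sub hm'1]
    norm_num
  have hMpos : (0:ℝ) < (m:ℝ)^2 * ((m':ℝ)^2 * ((k:ℝ) ^ (2 * ∑ i, a i)
      * (k:ℝ) ^ (2 * ∑ i, a' i))) := by positivity
  have hrpow : X ^ (-(4 + 4 * LL k)) ≤ ((m:ℝ)^2)⁻¹ * (((m':ℝ)^2)⁻¹ *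
      (((k:ℝ) ^ (2 * ∑ i, a i))⁻¹ * ((k:ℝ) ^ (2 * ∑ i, a' i))⁻¹)) := by
    rw [Real.rpow_neg hX0.le]
    rw [show ((m:ℝ)^2)⁻¹ * (((m':ℝ)^2)⁻¹ * (((k:ℝ) ^ (2 * ∑ i, a i))⁻¹ *
        ((k:ℝ) ^ (2 * ∑ i, a' i))⁻¹))
      = ((m:ℝ)^2 * ((m':ℝ)^2 * ((k:ℝ) ^ (2 * ∑ i, a i) * (k:ℝ) ^ (2 * ∑ i, a' i))))⁻¹ by
        rw [mul_inv, mul_inv, mul_inv]]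
    exact inv_anti₀ hMpos hbig
  have hj0 : (0:ℝ) < ((j:ℝ)+1)⁻¹ := by positivity
  calc ((j:ℝ)+1)⁻¹ * 2⁻¹ * X ^ (-(4 + 4 * LL k))
      ≤ ((j:ℝ)+1)⁻¹ * 2⁻¹ * (((m:ℝ)^2)⁻¹ * (((m':ℝ)^2)⁻¹ *
          (((k:ℝ) ^ (2 * ∑ i, a i))⁻¹ * ((k:ℝ) ^ (2 * ∑ i, a' i))⁻¹))) := by
        apply mul_le_mul_of_nonneg_left hrpow (by positivity)
    _ = ((j:ℝ)+1)⁻¹ * eps0 k (m-1) (m'-1) a a' := by rw [heps]; ring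
    _ ≤ X - Y := le_of_lt hgt

lemma genSet_one_le {N : ℕ} {t : Fin N → ℝ} (ht : ∀ i, 1 < t i) {y : ℝ}
    (hy : y ∈ genSet t) : 1 ≤ y := by
  obtain ⟨m, hm1, a, rfl⟩ := hy
  have hm : (1:ℝ) ≤ m := by exact_mod_cast hm1
  have hp : (1:ℝ) ≤ ∏ i, t i ^ a i := prod_pow_ge_one' (fun i => (ht i).le) a
  calc (1:ℝ) = 1 * 1 := by ring
    _ ≤ (m:ℝ) * ∏ i, t i ^ a i := mul_le_mul hm hp zero_le_one (by linarith)

lemma genSet_finite {N : ℕ} (t : Fin N → ℝ) (ht : ∀ i, 1 < t i) (x : ℝ) :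
    {y ∈ genSet t | y ≤ x}.Finite := by
  classical
  -- the parameter set is finite
  have hsingle : ∀ i : Fin N, {e : ℕ | t i ^ e ≤ x}.Finite := by
    intro i
    obtain ⟨n₀, hn₀⟩ := pow_unbounded_of_one_lt x (ht i)
    apply Set.Finite.subset (Set.finite_Iic n₀)
    intro e he
    simp only [Set.mem_setOf_eq] at he
    simp only [Set.mem_Iic]
    by_contra hcon
    push_neg at hcon
    have : t i ^ n₀ ≤ t i ^ e :=
      pow_le_pow_right₀ (ht i).le (le_of_lt hcon)
    linarith
  have hK : ({p : ℕ × (Fin N → ℕ) | (p.1:ℝ) ≤ x ∧ ∀ i, t i ^ p.2 i ≤ x}).Finite := by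
    apply Set.Finite.subset (Set.Finite.prod
      (Set.finite_Iic (⌊x⌋₊)) (Set.Finite.pi (fun i => hsingle i)))
    rintro ⟨m, a⟩ ⟨h1, h2⟩
    constructor
    · simp only [Set.mem_Iic]
      exact Nat.le_floor h1
    · intro i _
      exact h2 i
  apply Set.Finite.subset (hK.image (fun p => (p.1:ℝ) * ∏ i, t i ^ p.2 i))
  rintro y ⟨⟨m, hm1, a, rfl⟩, hyx⟩
  have ht1 : ∀ i, 1 ≤ t i := fun i => (ht i).le
  have hm : (1:ℝ) ≤ m := by exact_mod_cast hm1
  have hp : (1:ℝ) ≤ ∏ i, t i ^ a i := prod_pow_ge_one' ht1 a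
  refine ⟨(m, a), ⟨?_, ?_⟩, rfl⟩
  · calc (m:ℝ) = m * 1 := by ring
      _ ≤ (m:ℝ) * ∏ i, t i ^ a i := mul_le_mul_of_nonneg_left hp (by linarith)
      _ ≤ x := hyx
  · intro i
    have h2 : (1:ℝ) ≤ ∏ i' ∈ Finset.univ.erase i, t i' ^ a i' := by
      calc (1:ℝ) = ∏ _i' ∈ Finset.univ.erase i, (1:ℝ) := by simp
        _ ≤ ∏ i' ∈ Finset.univ.erase i, t i' ^ a i' :=
            Finset.prod_le_prod (fun _ _ => zero_le_one)
              (fun i' _ => one_le_pow₀ (ht1 i'))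
    have h1 : t i ^ a i ≤ ∏ i', t i' ^ a i' := by
      rw [← Finset.mul_prod_erase Finset.univ _ (Finset.mem_univ i)]
      calc t i ^ a i = t i ^ a i * 1 := by ring
        _ ≤ t i ^ a i * ∏ i' ∈ Finset.univ.erase i, t i' ^ a i' :=
            mul_le_mul_of_nonneg_left h2
              (by have := ht1 i; positivity)
    calc t i ^ a i ≤ ∏ i', t i' ^ a i' := h1
      _ = 1 * ∏ i', t i' ^ a i' := by ring
      _ ≤ (m:ℝ) * ∏ i', t i' ^ a i' := mul_le_mul_of_nonneg_right hm (by linarith)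
      _ ≤ x := hyx

lemma cover (t : Fin (n+1) → ℝ) (ht : ∀ i, 1 < t i) : ∃ k : ℕ, t ∈ box n (k+2) := by
  have hne : (Finset.univ : Finset (Fin (n+1))).Nonempty := Finset.univ_nonempty
  set mu := Finset.univ.inf' hne t with hmu
  set Mx := Finset.univ.sup' hne t with hMx
  have hmu1 : 1 < mu := by
    rw [hmu, Finset.lt_inf'_iff]
    exact fun i _ => ht i
  have hmule : ∀ i, mu ≤ t i := fun i => Finset.inf'_le _ (Finset.mem_univ i)
  have hMxge : ∀ i, t i ≤ Mx := fun i => Finset.le_sup' _ (Finset.mem_univ i)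
  obtain ⟨K1, hK1⟩ := exists_nat_ge Mx
  obtain ⟨K2, hK2⟩ := exists_nat_ge (mu - 1)⁻¹
  refine ⟨K1 + K2, mem_box_iff.mpr fun i => ?_⟩
  have hc : ((K1 + K2 + 2 : ℕ):ℝ) = (K1:ℝ) + K2 + 2 := by push_cast; ring
  constructor
  · have hpos : (0:ℝ) < mu - 1 := by linarith
    have hK2' : (mu - 1)⁻¹ ≤ (K1:ℝ) + K2 + 2 := by
      have : (0:ℝ) ≤ (K1:ℝ) := Nat.cast_nonneg K1
      linarith
    have hinv : ((K1:ℝ) + K2 + 2)⁻¹ ≤ mu - 1 := by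
      rw [← inv_inv (mu - 1)]
      exact inv_anti₀ (by positivity) hK2'
    rw [hc]
    linarith [hmule i]
  · rw [hc]
    have : (0:ℝ) ≤ (K2:ℝ) := Nat.cast_nonneg K2
    linarith [hMxge i, hK1]

/-- The gap property. -/
def Gap {n : ℕ} (t : Fin (n+1) → ℝ) : Prop :=
  ∃ c₁ > (0:ℝ), ∃ c₂ > (0:ℝ), ∀ x ∈ genSet t, ∀ y ∈ genSet t, y < x →
    c₁ * x ^ (-c₂) ≤ x - y

lemma gap_ae : ∀ᵐ t : Fin (n+1) → ℝ ∂volume, (∀ i, 1 < t i) → Gap t := by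
  rw [ae_iff]
  refine measure_mono_null (t := ⋃ k : ℕ, ⋂ j : ℕ,
    ⋃ p : Idx n, EE (k+2) j p.1 p.2.1 p.2.2.1 p.2.2.2) ?_
    (measure_iUnion_null fun k => GG_null (k+2) (by omega))
  · intro t htbad
    simp only [Set.mem_setOf_eq, Classical.not_imp] at htbad
    obtain ⟨ht1, hng⟩ := htbad
    obtain ⟨k, hk⟩ := cover t ht1
    refine Set.mem_iUnion.mpr ⟨k, Set.mem_iInter.mpr fun j => ?_⟩
    by_contra hcon
    rw [Set.mem_iUnion] at hcon
    push_neg at hcon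
    apply hng
    refine ⟨((j:ℝ)+1)⁻¹ * 2⁻¹, by positivity, 4 + 4 * LL (k+2), ?_, ?_⟩
    · have := LL_pos (k+2) (by omega)
      linarith
    · exact gap_lemma (k+2) j (by omega) t hk hcon


lemma partA_null {n : ℕ} : volume {t : Fin (n+1) → ℝ |
    ¬ LinearIndependent ℚ (Sum.elim (fun m : ℕ => Real.log (Nat.nth Nat.Prime m))
      (fun i : Fin (n+1) => Real.log (t i)))} = 0 := by
  have hsub : {t : Fin (n+1) → ℝ |
      ¬ LinearIndependent ℚ (Sum.elim (fun m : ℕ => Real.log (Nat.nth Nat.Prime m))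
        (fun i : Fin (n+1) => Real.log (t i)))} ⊆
      ⋃ l : {l : (ℕ ⊕ Fin (n+1)) →₀ ℚ // l ≠ 0},
        {t : Fin (n+1) → ℝ | ∑ s ∈ (l : (ℕ ⊕ Fin (n+1)) →₀ ℚ).support,
          (((l : (ℕ ⊕ Fin (n+1)) →₀ ℚ)) s : ℝ) * vfam t s = 0} := by
    intro t ht
    simp only [Set.mem_setOf_eq] at ht
    rw [linearIndependent_iff] at ht
    push_neg at ht
    obtain ⟨l, hl0, hlne⟩ := ht
    refine Set.mem_iUnion.mpr ⟨⟨l, hlne⟩, ?_⟩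
    simp only [Set.mem_setOf_eq]
    rw [Finsupp.linearCombination_apply, Finsupp.sum] at hl0
    simpa [Rat.smul_def, vfam] using hl0
  exact measure_mono_null hsub (measure_iUnion_null fun l => relation_null l.1 l.2)

end BohrAux

/-- Adding almost any `N` Beurling primes to the ordinary primes retains
Bohr's condition for the generated Beurling integers. -/
theorem bohr_condition_ae_extension_of_rational_primes (N : ℕ) (hN : 1 ≤ N) :
    ∀ᵐ t : Fin N → ℝ ∂volume, (∀ i, 1 < t i) →
      (LinearIndependent ℚ
          (Sum.elim (fun n : ℕ => Real.log (Nat.nth Nat.Prime n))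
            (fun i : Fin N => Real.log (t i)))) ∧
      (∀ x : ℝ, {y ∈ genSet t | y ≤ x}.Finite) ∧
      (∀ ν : ℕ → ℝ, StrictMono ν → (∀ n, ν n ∈ genSet t) →
        (∀ y ∈ genSet t, ∃ n, ν n = y) → BohrCondition ν) := by
  obtain ⟨n, rfl⟩ : ∃ n, N = n + 1 := ⟨N - 1, (Nat.succ_pred_eq_of_pos hN).symm⟩
  have hA : ∀ᵐ t : Fin (n+1) → ℝ ∂volume,
      LinearIndependent ℚ (Sum.elim (fun m : ℕ => Real.log (Nat.nth Nat.Prime m))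
        (fun i : Fin (n+1) => Real.log (t i))) := by
    rw [ae_iff]
    exact BohrAux.partA_null
  have hG := BohrAux.gap_ae (n := n)
  filter_upwards [hA, hG] with t hAt hGt ht1
  refine ⟨hAt, fun x => BohrAux.genSet_finite t ht1 x, ?_⟩
  intro ν hmono hmem _hsurj
  obtain ⟨c1, hc1, c2, hc2, hgap⟩ := hGt ht1
  exact ⟨c1, hc1, c2, hc2, fun m =>
    hgap (ν (m+1)) (hmem (m+1)) (ν m) (hmem m) (hmono (Nat.lt_succ_self m))⟩
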